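/- Let Q : [0,T] → ℝ be continuous and nonnegative, α ≥ 0, and k : [0,T]×[0,T] → ℝ continuous and nonnegative, and suppose Q(t) ≤ α + ∫₀ᵗ k(t,τ)Q(τ)dτ for all t ∈ [0,T]. Then Q(t) ≤ α·exp(∫₀ᵗ sup_{s∈[τ,t]} k(s,τ) dτ) for all t ∈ [0,T]. -/

import Mathlib

open Set intervalIntegral

/-- Continuity of parametrized sup over a fixed compact interval. -/
lemma aux_sup_cont {a b : ℝ} (hab : a ≤ b) {F : ℝ × ℝ → ℝ} (hF : Continuous F) :
    ContinuousOn (fun τ => sSup ((fun s => F (s, τ)) '' Set.Icc a b)) (Set.Icc a b) := by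
  have hcpt : IsCompact (Set.Icc a b ×ˢ Set.Icc a b) := isCompact_Icc.prod isCompact_Icc
  have huc := hcpt.uniformContinuousOn_of_continuous hF.continuousOn
  rw [Metric.uniformContinuousOn_iff] at huc
  have hbdd : ∀ τ, BddAbove ((fun s => F (s, τ)) '' Set.Icc a b) := fun τ =>
    (isCompact_Icc.image (hF.comp (continuous_id.prodMk continuous_const))).bddAbove
  have hne : ∀ τ, ((fun s => F (s, τ)) '' Set.Icc a b).Nonempty :=
    fun τ => (Set.nonempty_Icc.2 hab).image _
  have key : ∀ ε > 0, ∀ τ₁ ∈ Set.Icc a b, ∀ τ₂ ∈ Set.Icc a b,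
      (∀ s ∈ Set.Icc a b, dist (F (s, τ₁)) (F (s, τ₂)) < ε) →
      sSup ((fun s => F (s, τ₁)) '' Set.Icc a b) ≤
        sSup ((fun s => F (s, τ₂)) '' Set.Icc a b) + ε := by
    intro ε hε τ₁ _ τ₂ _ h
    refine csSup_le (hne τ₁) ?_
    rintro y ⟨s, hs, rfl⟩
    have h1 : F (s, τ₁) ≤ F (s, τ₂) + ε := by
      have := h s hs
      rw [Real.dist_eq] at this
      have := abs_lt.1 this
      linarith [this.1, this.2]
    exact h1.trans (add_le_add_left (le_csSup (hbdd τ₂) ⟨s, hs, rfl⟩) ε)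
  rw [Metric.continuousOn_iff]
  intro τ hτ ε hε
  obtain ⟨δ, hδ, hδ'⟩ := huc (ε / 2) (by linarith)
  refine ⟨δ, hδ, fun τ' hτ' hd => ?_⟩
  have hdist : ∀ s ∈ Set.Icc a b, dist (F (s, τ')) (F (s, τ)) < ε / 2 := by
    intro s hs
    refine hδ' (s, τ') (Set.mk_mem_prod hs hτ') (s, τ) (Set.mk_mem_prod hs hτ) ?_
    rw [Prod.dist_eq, dist_self, max_eq_right dist_nonneg]
    exact hd
  have h1 := key (ε / 2) (by linarith) τ' hτ' τ hτ hdist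
  have h2 := key (ε / 2) (by linarith) τ hτ τ' hτ'
    (fun s hs => by rw [dist_comm]; exact hdist s hs)
  rw [Real.dist_eq, abs_lt]
  constructor <;> linarith

theorem stmt17 (T α : ℝ) (hT : 0 < T) (hα : 0 ≤ α) (Q : ℝ → ℝ) (k : ℝ → ℝ → ℝ)
    (hQ : ContinuousOn Q (Set.Icc 0 T))
    (hQ0 : ∀ t ∈ Set.Icc (0:ℝ) T, 0 ≤ Q t)
    (hk : ContinuousOn (fun z : ℝ × ℝ => k z.1 z.2) (Set.Icc 0 T ×ˢ Set.Icc 0 T))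
    (hk0 : ∀ t ∈ Set.Icc (0:ℝ) T, ∀ τ ∈ Set.Icc (0:ℝ) T, 0 ≤ k t τ)
    (hineq : ∀ t ∈ Set.Icc (0:ℝ) T, Q t ≤ α + ∫ τ in (0:ℝ)..t, k t τ * Q τ) :
    ∀ t ∈ Set.Icc (0:ℝ) T,
      Q t ≤ α * Real.exp (∫ τ in (0:ℝ)..t, sSup ((fun s => k s τ) '' Set.Icc τ t)) := by
  intro t ht
  obtain ⟨ht0, htT⟩ := ht
  -- clamp to [0,T]
  set c : ℝ → ℝ := fun x => max 0 (min x T) with hc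
  have hc_mem : ∀ x, c x ∈ Set.Icc (0:ℝ) T := fun x =>
    ⟨le_max_left _ _, max_le hT.le (min_le_right _ _)⟩
  have hc_id : ∀ x ∈ Set.Icc (0:ℝ) T, c x = x := fun x hx => by
    simp [hc, min_eq_left hx.2, max_eq_right hx.1]
  have hc_cont : Continuous c := continuous_const.max (continuous_id.min continuous_const)
  -- globally continuous version of k(max s τ, τ)
  set F : ℝ × ℝ → ℝ := fun z => k (c (max z.1 z.2)) (c z.2) with hF
  have hF_cont : Continuous F := by
    have h1 : Continuous fun z : ℝ × ℝ => (c (max z.1 z.2), c z.2) :=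
      (hc_cont.comp (continuous_fst.max continuous_snd)).prodMk (hc_cont.comp continuous_snd)
    exact hk.comp_continuous h1 fun z => Set.mk_mem_prod (hc_mem _) (hc_mem _)
  set g : ℝ → ℝ := fun τ => sSup ((fun s => F (s, τ)) '' Set.Icc 0 t) with hg
  have hg_cont : ContinuousOn g (Set.Icc 0 t) := aux_sup_cont ht0 hF_cont
  have hbdd : ∀ τ, BddAbove ((fun s => F (s, τ)) '' Set.Icc 0 t) := fun τ =>
    (isCompact_Icc.image (hF_cont.comp (continuous_id.prodMk continuous_const))).bddAbove
  -- F evaluated at suitable points equals k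
  have hF_eq : ∀ s τ, τ ≤ s → s ∈ Set.Icc 0 t → τ ∈ Set.Icc 0 t → F (s, τ) = k s τ := by
    intro s τ hτs hs hτ
    have hsT : s ∈ Set.Icc (0:ℝ) T := ⟨hs.1, hs.2.trans htT⟩
    have hτT : τ ∈ Set.Icc (0:ℝ) T := ⟨hτ.1, hτ.2.trans htT⟩
    simp only [hF, max_eq_left hτs, hc_id s hsT, hc_id τ hτT]
  -- the sup in the statement equals g on [0,t]
  have himg : ∀ τ ∈ Set.Icc (0:ℝ) t,
      (fun s => k s τ) '' Set.Icc τ t = (fun s => F (s, τ)) '' Set.Icc 0 t := by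
    intro τ hτ
    ext y
    constructor
    · rintro ⟨s, hs, rfl⟩
      have hs' : s ∈ Set.Icc (0:ℝ) t := ⟨hτ.1.trans hs.1, hs.2⟩
      exact ⟨s, hs', hF_eq s τ hs.1 hs' hτ⟩
    · rintro ⟨s, hs, rfl⟩
      refine ⟨max s τ, ⟨le_max_right _ _, max_le hs.2 hτ.2⟩, ?_⟩
      have hm : max s τ ∈ Set.Icc (0:ℝ) t := ⟨hτ.1.trans (le_max_right _ _), max_le hs.2 hτ.2⟩
      show k (max s τ) τ = F (s, τ)
      rw [← hF_eq (max s τ) τ (le_max_right _ _) hm hτ]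
      show F (max s τ, τ) = F (s, τ)
      simp only [hF]
      rw [max_assoc, max_self]
  -- globally continuous versions of g and Q
  set ct : ℝ → ℝ := fun x => max 0 (min x t) with hct
  have hct_mem : ∀ x, ct x ∈ Set.Icc (0:ℝ) t := fun x =>
    ⟨le_max_left _ _, max_le ht0 (min_le_right _ _)⟩
  have hct_id : ∀ x ∈ Set.Icc (0:ℝ) t, ct x = x := fun x hx => by
    simp [hct, min_eq_left hx.2, max_eq_right hx.1]
  have hct_cont : Continuous ct := continuous_const.max (continuous_id.min continuous_const)
  set g' : ℝ → ℝ := fun x => g (ct x) with hg'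
  set Q' : ℝ → ℝ := fun x => Q (c x) with hQ'
  have hg'_cont : Continuous g' := hg_cont.comp_continuous hct_cont hct_mem
  have hQ'_cont : Continuous Q' := hQ.comp_continuous hc_cont hc_mem
  have hg'_eq : ∀ x ∈ Set.Icc (0:ℝ) t, g' x = g x := fun x hx => by
    show g (ct x) = g x
    rw [hct_id x hx]
  have hQ'_eq : ∀ x ∈ Set.Icc (0:ℝ) t, Q' x = Q x := fun x hx => by
    show Q (c x) = Q x
    rw [hc_id x ⟨hx.1, hx.2.trans htT⟩]
  have hQ'0 : ∀ x, 0 ≤ Q' x := fun x => hQ0 _ (hc_mem x)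
  -- nonnegativity of g on [0,t]
  have hg_nonneg : ∀ τ ∈ Set.Icc (0:ℝ) t, 0 ≤ g τ := by
    intro τ hτ
    have h1 : F (τ, τ) ∈ (fun s => F (s, τ)) '' Set.Icc 0 t := ⟨τ, hτ, rfl⟩
    refine le_trans ?_ (le_csSup (hbdd τ) h1)
    rw [hF_eq τ τ le_rfl hτ hτ]
    exact hk0 _ ⟨hτ.1, hτ.2.trans htT⟩ _ ⟨hτ.1, hτ.2.trans htT⟩
  have hg'0 : ∀ x, 0 ≤ g' x := fun x => hg_nonneg _ (hct_mem x)
  -- k x τ ≤ g τ for 0 ≤ τ ≤ x ≤ t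
  have hkg : ∀ x ∈ Set.Icc (0:ℝ) t, ∀ τ ∈ Set.Icc (0:ℝ) x, k x τ ≤ g τ := by
    intro x hx τ hτ
    have hτt : τ ∈ Set.Icc (0:ℝ) t := ⟨hτ.1, hτ.2.trans hx.2⟩
    rw [← hF_eq x τ hτ.2 hx hτt]
    exact le_csSup (hbdd τ) ⟨x, hx, rfl⟩
  -- primitives
  set I1 : ℝ → ℝ := fun x => ∫ τ in (0:ℝ)..x, g' τ * Q' τ with hI1
  set I2 : ℝ → ℝ := fun x => ∫ τ in (0:ℝ)..x, g' τ with hI2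
  have hgQ_cont : Continuous fun τ => g' τ * Q' τ := hg'_cont.mul hQ'_cont
  -- key inequality Q x ≤ α + I1 x on [0,t]
  have hQB : ∀ x ∈ Set.Icc (0:ℝ) t, Q x ≤ α + I1 x := by
    intro x hx
    have h1 := hineq x ⟨hx.1, hx.2.trans htT⟩
    have h2 : (∫ τ in (0:ℝ)..x, k x τ * Q τ) ≤ I1 x := by
      refine intervalIntegral.integral_mono_on hx.1 ?_
        (hgQ_cont.intervalIntegrable 0 x) ?_
      · have hcont : ContinuousOn (fun τ => k x τ * Q τ) (Set.Icc 0 x) := by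
          have hIcc : Set.Icc (0:ℝ) x ⊆ Set.Icc 0 T :=
            Set.Icc_subset_Icc le_rfl (hx.2.trans htT)
          refine ContinuousOn.mul ?_ (hQ.mono hIcc)
          refine hk.comp (Continuous.continuousOn (continuous_const.prodMk continuous_id)) ?_
          exact fun τ hτ => Set.mk_mem_prod ⟨hx.1, hx.2.trans htT⟩ (hIcc hτ)
        exact hcont.intervalIntegrable_of_Icc hx.1
      · intro τ hτ
        have hτt : τ ∈ Set.Icc (0:ℝ) t := ⟨hτ.1, hτ.2.trans hx.2⟩
        rw [hg'_eq τ hτt, hQ'_eq τ hτt]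
        exact mul_le_mul_of_nonneg_right (hkg x hx τ hτ)
          (hQ0 τ ⟨hτ.1, hτ.2.trans (hx.2.trans htT)⟩)
    linarith
  -- the Gronwall function
  set ψ : ℝ → ℝ := fun x => (α + I1 x) * Real.exp (-I2 x) with hψ
  have hderiv : ∀ x, HasDerivAt ψ
      ((g' x * Q' x) * Real.exp (-I2 x) + (α + I1 x) * (Real.exp (-I2 x) * -g' x)) x := by
    intro x
    have h1 : HasDerivAt I1 (g' x * Q' x) x :=
      (hgQ_cont.integral_hasStrictDerivAt 0 x).hasDerivAt
    have h2 : HasDerivAt I2 (g' x) x := (hg'_cont.integral_hasStrictDerivAt 0 x).hasDerivAt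
    have h3 : HasDerivAt (fun x => Real.exp (-I2 x)) (Real.exp (-I2 x) * -g' x) x :=
      (h2.neg).exp
    exact ((h1.const_add α).mul h3)
  have hanti : AntitoneOn ψ (Set.Icc 0 t) := by
    have hψc : Continuous ψ := continuous_iff_continuousAt.2 fun x => (hderiv x).continuousAt
    refine antitoneOn_of_deriv_nonpos (convex_Icc 0 t) hψc.continuousOn ?_ ?_
    · exact fun x _ => (hderiv x).differentiableAt.differentiableWithinAt
    · intro x hx
      rw [interior_Icc] at hx
      rw [(hderiv x).deriv]
      have hxm : x ∈ Set.Icc (0:ℝ) t := ⟨hx.1.le, hx.2.le⟩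
      have hQx : Q' x ≤ α + I1 x := by rw [hQ'_eq x hxm]; exact hQB x hxm
      have hE : (0:ℝ) < Real.exp (-I2 x) := Real.exp_pos _
      have hgx := hg'0 x
      have heq : (g' x * Q' x) * Real.exp (-I2 x) + (α + I1 x) * (Real.exp (-I2 x) * -g' x)
          = (g' x * (Q' x - (α + I1 x))) * Real.exp (-I2 x) := by ring
      rw [heq]
      exact mul_nonpos_of_nonpos_of_nonneg
        (mul_nonpos_of_nonneg_of_nonpos hgx (by linarith)) hE.le
  have hψ0 : ψ 0 = α := by
    simp [hψ, hI1, hI2]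
  have hψt := hanti (Set.left_mem_Icc.2 ht0) (Set.right_mem_Icc.2 ht0) ht0
  rw [hψ0] at hψt
  -- conclude
  have hfinal : Q t ≤ α * Real.exp (I2 t) := by
    have h1 : Q t ≤ α + I1 t := hQB t (Set.right_mem_Icc.2 ht0)
    have h2 : (α + I1 t) * Real.exp (-I2 t) ≤ α := hψt
    have hE : (0:ℝ) < Real.exp (-I2 t) := Real.exp_pos _
    have h3 : α + I1 t ≤ α * Real.exp (I2 t) := by
      have hEinv : Real.exp (-I2 t) = (Real.exp (I2 t))⁻¹ := Real.exp_neg _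
      calc α + I1 t = ((α + I1 t) * Real.exp (-I2 t)) * Real.exp (I2 t) := by
            rw [mul_assoc, ← Real.exp_add]; simp
        _ ≤ α * Real.exp (I2 t) := mul_le_mul_of_nonneg_right h2 (Real.exp_pos _).le
    linarith
  have hIeq : (∫ τ in (0:ℝ)..t, sSup ((fun s => k s τ) '' Set.Icc τ t)) = I2 t := by
    refine intervalIntegral.integral_congr fun τ hτ => ?_
    rw [Set.uIcc_of_le ht0] at hτ
    rw [hg'_eq τ hτ]
    show sSup ((fun s => k s τ) '' Set.Icc τ t) = sSup ((fun s => F (s, τ)) '' Set.Icc 0 t)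
    rw [himg τ hτ]
  rw [hIeq]
  exact hfinal
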